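/- arXiv:1202.1573 — 2 statements merged into one kernel-verified Lean document; each statement's English description precedes it below -/
import Mathlib

section
/- Let H be a real inner product space, let T > 0, and let θ : [0,T] → H be differentiable with θ(0) = 0. Let g : [0,T] → [0,∞) be continuous, and suppose that ⟨θ'(t), θ(t)⟩ ≤ g(t)·‖θ(t)‖ for every t ∈ [0,T]. Then ‖θ(t)‖ ≤ ∫₀ᵗ g(s) ds for every t ∈ [0,T]. -/
open RealInnerProductSpace

/-- Regularized Grönwall-type estimate (Thomée's technique): if θ(0) = 0 and
⟨θ'(t), θ(t)⟩ ≤ g(t)‖θ(t)‖ on [0,T] with g continuous and nonnegative, then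
‖θ(t)‖ ≤ ∫₀ᵗ g(s) ds on [0,T]. -/
theorem gronwall_regularized
    {H : Type*} [NormedAddCommGroup H] [InnerProductSpace ℝ H]
    (T : ℝ) (hT : 0 < T)
    (θ : ℝ → H) (θ' : ℝ → H)
    (hθ : ∀ t ∈ Set.Icc (0 : ℝ) T, HasDerivWithinAt θ (θ' t) (Set.Icc 0 T) t)
    (hθ0 : θ 0 = 0)
    (g : ℝ → ℝ)
    (hg_cont : ContinuousOn g (Set.Icc 0 T))
    (hg_nonneg : ∀ t ∈ Set.Icc (0 : ℝ) T, 0 ≤ g t)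
    (hbound : ∀ t ∈ Set.Icc (0 : ℝ) T, ⟪θ' t, θ t⟫ ≤ g t * ‖θ t‖) :
    ∀ t ∈ Set.Icc (0 : ℝ) T, ‖θ t‖ ≤ ∫ s in (0 : ℝ)..t, g s := by
  intro t ht
  refine le_of_forall_pos_le_add ?_
  intro δ hδ
  -- continuous extension of g to ℝ
  set G : ℝ → ℝ := fun s => (Set.Icc (0:ℝ) T).restrict g (Set.projIcc 0 T hT.le s)
    with hGdef
  have hGcont : Continuous G := hg_cont.restrict.comp (continuous_projIcc)
  have hGeq : ∀ s ∈ Set.Icc (0:ℝ) T, G s = g s := by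
    intro s hs
    simp [hGdef, Set.projIcc_of_mem hT.le hs]
    rfl
  have hGnonneg : ∀ s, 0 ≤ G s := by
    intro s
    exact hg_nonneg _ (Set.projIcc 0 T hT.le s).2
  -- the regularized norm
  set φ : ℝ → ℝ := fun u => Real.sqrt (‖θ u‖^2 + δ^2) with hφdef
  have hqpos : ∀ u, 0 < ‖θ u‖^2 + δ^2 := fun u =>
    add_pos_of_nonneg_of_pos (sq_nonneg _) (pow_pos hδ 2)
  have hφpos : ∀ u, 0 < φ u := fun u => Real.sqrt_pos.2 (hqpos u)
  have hnorm_le_φ : ∀ u, ‖θ u‖ ≤ φ u := by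
    intro u
    rw [hφdef]
    calc ‖θ u‖ = Real.sqrt (‖θ u‖^2) := (Real.sqrt_sq (norm_nonneg _)).symm
    _ ≤ Real.sqrt (‖θ u‖^2 + δ^2) :=
        Real.sqrt_le_sqrt (le_add_of_nonneg_right (sq_nonneg _))
  -- the comparison function
  set F : ℝ → ℝ := fun u => (∫ s in (0:ℝ)..u, G s) - φ u with hFdef
  have hθcont : ContinuousOn θ (Set.Icc 0 T) := fun u hu => (hθ u hu).continuousWithinAt
  have hφcont : ContinuousOn φ (Set.Icc 0 T) := by
    apply Real.continuous_sqrt.comp_continuousOn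
    exact (hθcont.norm.pow 2).add continuousOn_const
  have hprim : Continuous fun u => ∫ s in (0:ℝ)..u, G s := by
    rw [continuous_iff_continuousAt]
    intro u
    exact ((hGcont.integral_hasStrictDerivAt 0 u).hasDerivAt).continuousAt
  have hFcont : ContinuousOn F (Set.Icc 0 T) := hprim.continuousOn.sub hφcont
  -- derivative of F at interior points
  have hFderiv : ∀ x ∈ Set.Ioo (0:ℝ) T,
      HasDerivAt F (G x - (2 * ⟪θ' x, θ x⟫) / (2 * Real.sqrt (‖θ x‖^2 + δ^2))) x := by
    intro x hx
    have hxIcc : x ∈ Set.Icc (0:ℝ) T := ⟨hx.1.le, hx.2.le⟩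
    have hnhds : Set.Icc (0:ℝ) T ∈ nhds x := Icc_mem_nhds hx.1 hx.2
    have hθx : HasDerivAt θ (θ' x) x := (hθ x hxIcc).hasDerivAt hnhds
    have h1 : HasDerivAt (fun u => ⟪θ u, θ u⟫ + δ^2)
        (⟪θ x, θ' x⟫ + ⟪θ' x, θ x⟫) x := (hθx.inner ℝ hθx).add_const _
    have h2 : HasDerivAt (fun u => ‖θ u‖^2 + δ^2) (2 * ⟪θ' x, θ x⟫) x := by
      have : (fun u => ⟪θ u, θ u⟫ + δ^2) = fun u => ‖θ u‖^2 + δ^2 := by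
        funext u; rw [real_inner_self_eq_norm_sq]
      rw [← this]
      convert h1 using 1
      rw [real_inner_comm (θ x) (θ' x)]; ring
    have hφx : HasDerivAt φ ((2 * ⟪θ' x, θ x⟫) / (2 * Real.sqrt (‖θ x‖^2 + δ^2))) x :=
      h2.sqrt (hqpos x).ne'
    have hGx : HasDerivAt (fun u => ∫ s in (0:ℝ)..u, G s) (G x) x :=
      (hGcont.integral_hasStrictDerivAt 0 x).hasDerivAt
    exact hGx.sub hφx
  -- F is monotone on [0, T]
  have hmono : MonotoneOn F (Set.Icc 0 T) := by
    apply monotoneOn_of_deriv_nonneg (convex_Icc (0:ℝ) T) hFcont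
    · rw [interior_Icc]
      intro x hx
      exact ((hFderiv x hx).differentiableAt).differentiableWithinAt
    · rw [interior_Icc]
      intro x hx
      rw [(hFderiv x hx).deriv]
      have hxIcc : x ∈ Set.Icc (0:ℝ) T := ⟨hx.1.le, hx.2.le⟩
      have hsq : 0 < Real.sqrt (‖θ x‖^2 + δ^2) := hφpos x
      rw [sub_nonneg, div_le_iff₀ (by positivity)]
      have h1 : ⟪θ' x, θ x⟫ ≤ g x * Real.sqrt (‖θ x‖^2 + δ^2) := by
        calc ⟪θ' x, θ x⟫ ≤ g x * ‖θ x‖ := hbound x hxIcc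
        _ ≤ g x * Real.sqrt (‖θ x‖^2 + δ^2) :=
            mul_le_mul_of_nonneg_left (hnorm_le_φ x) (hg_nonneg x hxIcc)
      rw [hGeq x hxIcc]
      nlinarith [hnorm_le_φ x, hg_nonneg x hxIcc]
  -- conclude
  have h0Icc : (0:ℝ) ∈ Set.Icc (0:ℝ) T := ⟨le_refl _, hT.le⟩
  have hF0 : F 0 = -δ := by
    simp [hFdef, hφdef, hθ0, Real.sqrt_sq hδ.le]
  have hle : F 0 ≤ F t := hmono h0Icc ht ht.1
  rw [hF0] at hle
  have hint_eq : (∫ s in (0:ℝ)..t, G s) = ∫ s in (0:ℝ)..t, g s := by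
    apply intervalIntegral.integral_congr
    intro s hs
    apply hGeq
    rw [Set.uIcc_of_le ht.1] at hs
    exact ⟨hs.1, hs.2.trans ht.2⟩
  have : φ t ≤ (∫ s in (0:ℝ)..t, g s) + δ := by
    rw [← hint_eq]
    have : (∫ s in (0:ℝ)..t, G s) - φ t ≥ -δ := hle
    linarith [this]
  exact le_trans (hnorm_le_φ t) this
end

section
/- Let W and Y be real inner product spaces, let D : Y → W be a linear map, and let W_h ⊆ W and Y_h ⊆ Y be linear subspaces. Let T > 0. Suppose θ : [0,T] → W is differentiable with θ(t) ∈ W_h for all t and θ(0) = 0, ε : [0,T] → Y satisfies ε(t) ∈ Y_h for all t, and ρ : [0,T] → W is differentiable with t ↦ ‖ρ'(t)‖ continuous. Assume that for every t ∈ [0,T]: ⟨θ'(t), φ⟩ − ⟨D ε(t), φ⟩ = −⟨ρ'(t), φ⟩ for all φ ∈ W_h, and ⟨ε(t), ω⟩ + ⟨θ(t), D ω⟩ = 0 for all ω ∈ Y_h. Then ‖θ(t)‖ ≤ ∫₀ᵗ ‖ρ'(s)‖ ds for every t ∈ [0,T]. -/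
open RealInnerProductSpace

/-- Key intermediate bound in the parabolic error estimate (Theorem 5.2): the
error equations together with θ(0) = 0 imply ‖θ(t)‖ ≤ ∫₀ᵗ ‖ρ'(s)‖ ds. -/
theorem theta_bound_parabolic
    {W Y : Type*} [NormedAddCommGroup W] [InnerProductSpace ℝ W]
    [NormedAddCommGroup Y] [InnerProductSpace ℝ Y]
    (D : Y →ₗ[ℝ] W) (Wh : Submodule ℝ W) (Yh : Submodule ℝ Y)
    (T : ℝ) (hT : 0 < T)
    (θ : ℝ → W) (θ' : ℝ → W)
    (hθ : ∀ t ∈ Set.Icc (0 : ℝ) T, HasDerivWithinAt θ (θ' t) (Set.Icc 0 T) t)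
    (hθ_mem : ∀ t ∈ Set.Icc (0 : ℝ) T, θ t ∈ Wh)
    (hθ0 : θ 0 = 0)
    (ε : ℝ → Y)
    (hε_mem : ∀ t ∈ Set.Icc (0 : ℝ) T, ε t ∈ Yh)
    (ρ : ℝ → W) (ρ' : ℝ → W)
    (hρ : ∀ t ∈ Set.Icc (0 : ℝ) T, HasDerivWithinAt ρ (ρ' t) (Set.Icc 0 T) t)
    (hρ'_cont : ContinuousOn (fun t => ‖ρ' t‖) (Set.Icc 0 T))
    (h1 : ∀ t ∈ Set.Icc (0 : ℝ) T, ∀ φ ∈ Wh,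
      ⟪θ' t, φ⟫ - ⟪D (ε t), φ⟫ = -⟪ρ' t, φ⟫)
    (h2 : ∀ t ∈ Set.Icc (0 : ℝ) T, ∀ ω ∈ Yh,
      ⟪ε t, ω⟫ + ⟪θ t, D ω⟫ = 0) :
    ∀ t ∈ Set.Icc (0 : ℝ) T, ‖θ t‖ ≤ ∫ s in (0 : ℝ)..t, ‖ρ' s‖ := by
  -- key pointwise inner-product estimate
  have key : ∀ x ∈ Set.Icc (0 : ℝ) T, ⟪θ' x, θ x⟫ ≤ ‖ρ' x‖ * ‖θ x‖ := by
    intro x hx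
    have e1 := h1 x hx (θ x) (hθ_mem x hx)
    have e2 := h2 x hx (ε x) (hε_mem x hx)
    have hcomm : ⟪θ x, D (ε x)⟫ = ⟪D (ε x), θ x⟫ := real_inner_comm _ _
    have hsq : ⟪ε x, ε x⟫ = ‖ε x‖ ^ 2 := real_inner_self_eq_norm_sq _
    have hcs : |⟪ρ' x, θ x⟫| ≤ ‖ρ' x‖ * ‖θ x‖ := abs_real_inner_le_norm _ _
    have hcs' : -⟪ρ' x, θ x⟫ ≤ ‖ρ' x‖ * ‖θ x‖ := by
      have := neg_abs_le ⟪ρ' x, θ x⟫; linarith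
    nlinarith [sq_nonneg ‖ε x‖]
  set R : ℝ → ℝ := fun t => ∫ s in (0 : ℝ)..t, ‖ρ' s‖ with hR
  have hint : IntervalIntegrable (fun s => ‖ρ' s‖) MeasureTheory.volume 0 T :=
    hρ'_cont.intervalIntegrable_of_Icc hT.le
  have hRcont : ContinuousOn R (Set.Icc 0 T) := by
    have := intervalIntegral.continuousOn_primitive_interval' hint
      (by rw [Set.uIcc_of_le hT.le]; exact Set.left_mem_Icc.2 hT.le)
    rwa [Set.uIcc_of_le hT.le] at this
  have hRnonneg : ∀ x ∈ Set.Icc (0 : ℝ) T, 0 ≤ R x := by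
    intro x hx
    exact intervalIntegral.integral_nonneg hx.1 (fun s _ => norm_nonneg _)
  have hRderiv : ∀ x ∈ Set.Ico (0 : ℝ) T, HasDerivWithinAt R (‖ρ' x‖) (Set.Ici x) x := by
    intro x hx
    have hx' : x ∈ Set.Icc (0 : ℝ) T := ⟨hx.1, hx.2.le⟩
    have hint' : IntervalIntegrable (fun s => ‖ρ' s‖) MeasureTheory.volume 0 x :=
      (hρ'_cont.mono (Set.Icc_subset_Icc le_rfl hx.2.le)).intervalIntegrable_of_Icc hx.1
    have hmeas : StronglyMeasurableAtFilter (fun s => ‖ρ' s‖) (nhdsWithin x (Set.Ioi x))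
        MeasureTheory.volume :=
      ⟨Set.Icc 0 T, Icc_mem_nhdsGT_of_mem hx,
        hρ'_cont.aestronglyMeasurable measurableSet_Icc⟩
    have hcont : ContinuousWithinAt (fun s => ‖ρ' s‖) (Set.Ioi x) x :=
      (hρ'_cont x hx').mono_of_mem_nhdsWithin (Icc_mem_nhdsGT_of_mem hx)
    exact intervalIntegral.integral_hasDerivWithinAt_right hint' hmeas hcont
  have hθcont : ContinuousOn θ (Set.Icc 0 T) := fun x hx => (hθ x hx).continuousWithinAt
  -- comparison for each δ > 0
  have main : ∀ δ > (0:ℝ), ∀ t ∈ Set.Icc (0:ℝ) T, ‖θ t‖ ≤ R t + δ * (1 + t) := by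
    intro δ hδ t ht
    set f : ℝ → ℝ := fun t => ⟪θ t, θ t⟫ with hf
    set B : ℝ → ℝ := fun t => (R t + δ * (1 + t)) ^ 2 with hB
    have hfB : ∀ x ∈ Set.Icc (0:ℝ) T, f x ≤ B x := by
      refine image_le_of_deriv_right_lt_deriv_boundary'
        (f' := fun x => 2 * ⟪θ' x, θ x⟫)
        (B' := fun x => 2 * (R x + δ * (1 + x)) * (‖ρ' x‖ + δ))
        (fun x hx => ((hθ x hx).inner ℝ (hθ x hx)).continuousWithinAt)
        (fun x hx => ?_) ?_
        ((hRcont.add (by fun_prop)).pow 2)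
        (fun x hx => ?_) (fun x hx hfx => ?_)
      · -- derivative of f within Ici x
        have hder : HasDerivWithinAt θ (θ' x) (Set.Ici x) x :=
          (hθ x ⟨hx.1, hx.2.le⟩).mono_of_mem_nhdsWithin (Icc_mem_nhdsGE_of_mem hx)
        have := hder.inner ℝ hder
        exact this.congr_deriv (by
        rw [real_inner_comm (θ' x) (θ x)]; ring)
      · -- f 0 ≤ B 0
        simp only [hf, hB, hθ0, inner_zero_left]
        positivity
      · -- derivative of B within Ici x
        have hbase : HasDerivWithinAt (fun t => R t + δ * (1 + t)) (‖ρ' x‖ + δ)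
            (Set.Ici x) x := by
          refine (hRderiv x hx).add ?_
          simpa using ((hasDerivWithinAt_id x (Set.Ici x)).const_add 1).const_mul δ
        have := hbase.pow 2
        exact this.congr_deriv (by
        norm_num)
      · -- strict inequality at touching points
        have hx' : x ∈ Set.Icc (0:ℝ) T := ⟨hx.1, hx.2.le⟩
        have hbpos : 0 < R x + δ * (1 + x) := by
          have := hRnonneg x hx'; nlinarith [hx.1]
        have hfeq : ‖θ x‖ ^ 2 = (R x + δ * (1 + x)) ^ 2 := by
          rw [← real_inner_self_eq_norm_sq]; exact hfx
        have hle : ‖θ x‖ ≤ R x + δ * (1 + x) := by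
          nlinarith [norm_nonneg (θ x), sq_nonneg (‖θ x‖ - (R x + δ * (1 + x)))]
        have hk := key x hx'
        show 2 * ⟪θ' x, θ x⟫ < 2 * (R x + δ * (1 + x)) * (‖ρ' x‖ + δ)
        nlinarith [norm_nonneg (ρ' x), norm_nonneg (θ x), mul_pos hbpos hδ,
          mul_le_mul_of_nonneg_left hle (norm_nonneg (ρ' x))]
    have := hfB t ht
    have hbn : 0 ≤ R t + δ * (1 + t) := by
      have := hRnonneg t ht; nlinarith [ht.1]
    have : ‖θ t‖ ^ 2 ≤ (R t + δ * (1 + t)) ^ 2 := by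
      rw [← real_inner_self_eq_norm_sq]; exact this
    nlinarith [norm_nonneg (θ t)]
  intro t ht
  refine le_of_forall_pos_le_add ?_
  intro η hη
  have h1T : (0:ℝ) < 1 + T := by linarith
  have hδ : (0:ℝ) < η / (1 + T) := div_pos hη h1T
  have := main _ hδ t ht
  have : η / (1 + T) * (1 + t) ≤ η := by
    rw [div_mul_eq_mul_div, div_le_iff₀ h1T]
    nlinarith [ht.2, hη.le]
  linarith [main _ hδ t ht]
end
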